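/- Assume (A2), (A3) and (A5) hold. Then the map v ↦ g(x, F₊(x,v), v) is strictly decreasing in v ≥ 0 for each x ∈ Ω̄. Moreover, for any fixed M₁ > 0 there exists σ₁ = σ₁(M₁) > 0 such that for all x ∈ Ω̄ and all 0 ≤ v < v₁ ≤ M₁: g(x, F₊(x,v₁), v₁) − g(x, F₊(x,v), v) ≤ −σ₁ (v₁ − v). -/

import Mathlib

open MeasureTheory Filter BoundedContinuousFunction

open Topology

/-- A function on `[a,b] ⊆ [0,∞)` whose derivative within `[0,∞)` is nonpositive is
antitone on `[a,b]`. -/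
lemma antiOn_Icc_aux {a b : ℝ} (ha : 0 ≤ a) {φ φ' : ℝ → ℝ}
    (hd : ∀ w ∈ Set.Icc a b, HasDerivWithinAt φ (φ' w) (Set.Ici 0) w)
    (hneg : ∀ w ∈ Set.Icc a b, φ' w ≤ 0) :
    AntitoneOn φ (Set.Icc a b) := by
  have hsub : Set.Icc a b ⊆ Set.Ici (0 : ℝ) :=
    Set.Icc_subset_Ici_self.trans (Set.Ici_subset_Ici.2 ha)
  have hda : ∀ w ∈ interior (Set.Icc a b), HasDerivAt φ (φ' w) w := by
    intro w hw
    rw [interior_Icc] at hw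
    exact (hd w (Set.mem_Icc_of_Ioo hw)).hasDerivAt
      (Ici_mem_nhds (lt_of_le_of_lt ha hw.1))
  apply antitoneOn_of_deriv_nonpos (convex_Icc a b)
  · exact fun w hw => ((hd w hw).mono hsub).continuousWithinAt
  · exact fun w hw => (hda w hw).differentiableAt.differentiableWithinAt
  · intro w hw
    rw [(hda w hw).deriv]
    rw [interior_Icc] at hw
    exact hneg w (Set.mem_Icc_of_Ioo hw)

lemma Dneg_aux {gv gu fv fu : ℝ} (hfu : fu < 0) (h5 : fv * gu < fu * gv) :
    gv + gu * (-fv / fu) < 0 := by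
  have hne : fu ≠ 0 := ne_of_lt hfu
  have h : gv + gu * (-fv / fu) = (fu * gv - fv * gu) / fu := by
    field_simp
    ring
  rw [h]
  exact div_neg_of_pos_of_neg (by linarith) hfu

theorem stmt_8
    {n : ℕ} (hn : 1 ≤ n)
    (Ω : Set (Fin n → ℝ)) (hΩo : IsOpen Ω) (hΩb : Bornology.IsBounded Ω)
    (hΩc : IsConnected Ω)
    (f g fu fv gu gv : (Fin n → ℝ) → ℝ → ℝ → ℝ)
    (hdfu : ∀ x ∈ closure Ω, ∀ u ∈ Set.Ici (0:ℝ), ∀ v ∈ Set.Ici (0:ℝ),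
      HasDerivWithinAt (fun s => f x s v) (fu x u v) (Set.Ici 0) u)
    (hdfv : ∀ x ∈ closure Ω, ∀ u ∈ Set.Ici (0:ℝ), ∀ v ∈ Set.Ici (0:ℝ),
      HasDerivWithinAt (fun s => f x u s) (fv x u v) (Set.Ici 0) v)
    (hdgu : ∀ x ∈ closure Ω, ∀ u ∈ Set.Ici (0:ℝ), ∀ v ∈ Set.Ici (0:ℝ),
      HasDerivWithinAt (fun s => g x s v) (gu x u v) (Set.Ici 0) u)
    (hdgv : ∀ x ∈ closure Ω, ∀ u ∈ Set.Ici (0:ℝ), ∀ v ∈ Set.Ici (0:ℝ),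
      HasDerivWithinAt (fun s => g x u s) (gv x u v) (Set.Ici 0) v)
    (hfcont : ContinuousOn (fun q : (Fin n → ℝ) × ℝ × ℝ => f q.1 q.2.1 q.2.2)
      ((closure Ω) ×ˢ (Set.Ici 0 ×ˢ Set.Ici 0)))
    (hgcont : ContinuousOn (fun q : (Fin n → ℝ) × ℝ × ℝ => g q.1 q.2.1 q.2.2)
      ((closure Ω) ×ˢ (Set.Ici 0 ×ˢ Set.Ici 0)))
    (hfucont : ContinuousOn (fun q : (Fin n → ℝ) × ℝ × ℝ => fu q.1 q.2.1 q.2.2)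
      ((closure Ω) ×ˢ (Set.Ici 0 ×ˢ Set.Ici 0)))
    (hfvcont : ContinuousOn (fun q : (Fin n → ℝ) × ℝ × ℝ => fv q.1 q.2.1 q.2.2)
      ((closure Ω) ×ˢ (Set.Ici 0 ×ˢ Set.Ici 0)))
    (hgucont : ContinuousOn (fun q : (Fin n → ℝ) × ℝ × ℝ => gu q.1 q.2.1 q.2.2)
      ((closure Ω) ×ˢ (Set.Ici 0 ×ˢ Set.Ici 0)))
    (hgvcont : ContinuousOn (fun q : (Fin n → ℝ) × ℝ × ℝ => gv q.1 q.2.1 q.2.2)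
      ((closure Ω) ×ˢ (Set.Ici 0 ×ˢ Set.Ici 0)))
    (hA2 : ∀ x ∈ closure Ω, ∀ u ∈ Set.Ici (0:ℝ), ∀ v ∈ Set.Ici (0:ℝ),
      fu x u v < 0 ∧ gv x u v < 0)
    (hA3 : ∀ x ∈ closure Ω, ∀ u ∈ Set.Ici (0:ℝ), ∀ v ∈ Set.Ici (0:ℝ),
      fv x u v < 0 ∧ gu x u v < 0)
    (hA5 : ∀ x ∈ closure Ω, ∀ u ∈ Set.Ici (0:ℝ), ∀ v ∈ Set.Ici (0:ℝ),
      fv x u v * gu x u v < fu x u v * gv x u v)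
    (F : (Fin n → ℝ) → ℝ → ℝ)
    (hFcont : ContinuousOn (fun q : (Fin n → ℝ) × ℝ => F q.1 q.2) ((closure Ω) ×ˢ Set.Ici 0))
    (hF : ∀ x ∈ closure Ω, ∀ v ∈ Set.Ici (0:ℝ), f x (F x v) v = 0)
    (hFderiv : ∀ x ∈ closure Ω, ∀ v ∈ Set.Ici (0:ℝ),
      HasDerivWithinAt (fun s => F x s) (-(fv x (F x v) v) / fu x (F x v) v) (Set.Ici 0) v)
 :
    (∀ x ∈ closure Ω, StrictAntiOn (fun w => g x (max (F x w) 0) w) (Set.Ici 0)) ∧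
    (∀ M₁ : ℝ, 0 < M₁ → ∃ σ₁ : ℝ, 0 < σ₁ ∧ ∀ x ∈ closure Ω, ∀ v v₁ : ℝ,
      0 ≤ v → v < v₁ → v₁ ≤ M₁ →
      g x (max (F x v₁) 0) v₁ - g x (max (F x v) 0) v ≤ -σ₁ * (v₁ - v)) := by
  -- continuity of `F x` in the second variable
  have hFc : ∀ x ∈ closure Ω, ContinuousOn (F x) (Set.Ici 0) := by
    intro x hx v hv
    exact (hFderiv x hx v hv).continuousWithinAt
  -- `F₊(x, ·)` is antitone on `[0, ∞)`
  have hFanti : ∀ x ∈ closure Ω, AntitoneOn (fun w => max (F x w) 0) (Set.Ici 0) := by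
    intro x hx a ha b hb hab
    by_contra hcon
    push_neg at hcon
    have h0max : 0 < max (F x b) 0 := lt_of_le_of_lt (le_max_right _ _) hcon
    have hFb : 0 < F x b := by
      by_contra hc
      push_neg at hc
      rw [max_eq_right hc] at h0max
      exact lt_irrefl _ h0max
    have hFbmax : max (F x b) 0 = F x b := max_eq_left hFb.le
    rw [hFbmax] at hcon
    have haltb : a < b := by
      rcases lt_or_eq_of_le hab with h | h
      · exact h
      · subst h; exact absurd hcon (not_lt.2 (le_max_left _ _))
    set m : ℝ := (max (F x a) 0 + F x b) / 2 with hm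
    have hm1 : max (F x a) 0 < m := by rw [hm]; linarith
    have hm2 : m < F x b := by rw [hm]; linarith
    have hm0 : 0 < m := lt_of_le_of_lt (le_max_right _ _) hm1
    have hFa : F x a ≤ m := le_trans (le_max_left _ _) hm1.le
    have h0a : (0:ℝ) ≤ a := ha
    set T : Set ℝ := Set.Icc a b ∩ (F x) ⁻¹' Set.Iic m with hT
    have hFcab : ContinuousOn (F x) (Set.Icc a b) :=
      (hFc x hx).mono (Set.Icc_subset_Ici_self.trans (Set.Ici_subset_Ici.2 h0a))
    have hTclosed : IsClosed T :=
      hFcab.preimage_isClosed_of_isClosed isClosed_Icc isClosed_Iic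
    have hTne : T.Nonempty := ⟨a, ⟨le_rfl, hab⟩, hFa⟩
    have hTbdd : BddAbove T := ⟨b, fun w hw => hw.1.2⟩
    set w₀ := sSup T with hw₀
    have hw₀T : w₀ ∈ T := hTclosed.csSup_mem hTne hTbdd
    have hw₀m : F x w₀ ≤ m := hw₀T.2
    have hw₀b : w₀ < b := by
      rcases lt_or_eq_of_le hw₀T.1.2 with h | h
      · exact h
      · rw [h] at hw₀m; linarith
    have h0w₀ : (0:ℝ) ≤ w₀ := le_trans h0a hw₀T.1.1
    have hgt : ∀ w ∈ Set.Ioc w₀ b, m < F x w := by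
      intro w hw
      by_contra hle
      push_neg at hle
      have hwT : w ∈ T := ⟨⟨le_trans hw₀T.1.1 hw.1.le, hw.2⟩, hle⟩
      exact absurd (le_csSup hTbdd hwT) (not_le.2 hw.1)
    have hw₀ge : m ≤ F x w₀ := by
      have hct : Filter.Tendsto (F x) (𝓝[Set.Ioi w₀] w₀) (𝓝 (F x w₀)) :=
        ((hFc x hx) w₀ h0w₀).mono (fun y hy => le_of_lt (lt_of_le_of_lt h0w₀ hy))
      have hev : ∀ᶠ w in 𝓝[Set.Ioi w₀] w₀, m ≤ F x w :=
        Filter.eventually_of_mem (Ioc_mem_nhdsGT hw₀b) (fun w hw => (hgt w hw).le)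
      exact ge_of_tendsto hct hev
    have hFpos : ∀ w ∈ Set.Icc w₀ b, 0 ≤ F x w := by
      intro w hw
      rcases eq_or_lt_of_le hw.1 with h | h
      · rw [← h]; exact le_trans hm0.le hw₀ge
      · exact le_trans hm0.le (hgt w ⟨h, hw.2⟩).le
    have hanti : AntitoneOn (F x) (Set.Icc w₀ b) := by
      apply antiOn_Icc_aux (φ' := fun w => -(fv x (F x w) w) / fu x (F x w) w) h0w₀
      · intro w hw
        exact hFderiv x hx w (le_trans h0w₀ hw.1)
      · intro w hw
        have hw0 : w ∈ Set.Ici (0:ℝ) := le_trans h0w₀ hw.1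
        have hu0 : F x w ∈ Set.Ici (0:ℝ) := hFpos w hw
        have h1 := (hA2 x hx _ hu0 _ hw0).1
        have h2 := (hA3 x hx _ hu0 _ hw0).1
        exact div_nonpos_of_nonneg_of_nonpos (by linarith) h1.le
    have hfinal := hanti ⟨le_rfl, hw₀b.le⟩ ⟨hw₀b.le, le_rfl⟩ hw₀b.le
    linarith
  -- the composite right-derivative fact on intervals where `F ≥ 0`
  have hPhi : ∀ x ∈ closure Ω, ∀ w b : ℝ, 0 ≤ w → w < b → (∀ t ∈ Set.Icc w b, 0 ≤ F x t) →
      HasDerivWithinAt (fun z => g x (F x z) z)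
        (gv x (F x w) w + gu x (F x w) w * (-fv x (F x w) w / fu x (F x w) w))
        (Set.Icc w b) w := by
    intro x hx w b hw0 hwb hFnn
    have hFw : (0:ℝ) ≤ F x w := hFnn w ⟨le_rfl, hwb.le⟩
    have hsubIcc : Set.Ioc w b ⊆ Set.Ici 0 \ {w} := by
      intro z hz
      refine ⟨le_trans hw0 hz.1.le, ?_⟩
      simp only [Set.mem_singleton_iff]
      exact hz.1.ne'
    have hchoice : ∀ z : ℝ, ∃ η : ℝ, z ∈ Set.Ioc w b →
        0 ≤ η ∧ |η - F x w| ≤ |F x z - F x w| ∧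
        g x (F x z) z - g x (F x w) z = gu x η z * (F x z - F x w) := by
      intro z
      by_cases hz : z ∈ Set.Ioc w b
      swap
      · exact ⟨0, fun h => absurd h hz⟩
      have hz0 : (0:ℝ) ≤ z := le_trans hw0 hz.1.le
      have hFz : (0:ℝ) ≤ F x z := hFnn z ⟨hz.1.le, hz.2⟩
      rcases lt_trichotomy (F x w) (F x z) with hlt | heq | hgt
      · obtain ⟨η, hη, hηeq⟩ := exists_hasDerivAt_eq_slope (fun u => g x u z) (fun u => gu x u z)
          hlt
          (fun u hu => ((hdgu x hx u (le_trans hFw hu.1) z hz0).mono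
            (fun r hr => le_trans hFw hr.1)).continuousWithinAt)
          (fun u hu => (hdgu x hx u (le_trans hFw hu.1.le) z hz0).hasDerivAt
            (Ici_mem_nhds (lt_of_le_of_lt hFw hu.1)))
        refine ⟨η, fun _ => ⟨le_trans hFw hη.1.le, ?_, ?_⟩⟩
        · rw [abs_of_pos (sub_pos.2 hη.1), abs_of_pos (sub_pos.2 hlt)]
          linarith [hη.2]
        · rw [hηeq, div_mul_cancel₀ _ (sub_ne_zero.2 hlt.ne')]
      · exact ⟨F x w, fun _ => ⟨hFw, by simp [heq], by rw [heq]; ring⟩⟩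
      · obtain ⟨η, hη, hηeq⟩ := exists_hasDerivAt_eq_slope (fun u => g x u z) (fun u => gu x u z)
          hgt
          (fun u hu => ((hdgu x hx u (le_trans hFz hu.1) z hz0).mono
            (fun r hr => le_trans hFz hr.1)).continuousWithinAt)
          (fun u hu => (hdgu x hx u (le_trans hFz hu.1.le) z hz0).hasDerivAt
            (Ici_mem_nhds (lt_of_le_of_lt hFz hu.1)))
        rw [eq_div_iff (sub_ne_zero.2 hgt.ne')] at hηeq
        refine ⟨η, fun _ => ⟨le_trans hFz hη.1.le, ?_, by linear_combination hηeq⟩⟩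
        rw [abs_of_neg (sub_neg.2 hη.2), abs_of_neg (sub_neg.2 hgt)]
        linarith [hη.1]
    choose η hη using hchoice
    have hmem : ∀ᶠ z in 𝓝[Set.Ioc w b] w, z ∈ Set.Ioc w b := eventually_mem_nhdsWithin
    have hFtend : Filter.Tendsto (F x) (𝓝[Set.Ioc w b] w) (𝓝 (F x w)) :=
      ((hFc x hx) w hw0).mono (fun z hz => le_trans hw0 hz.1.le)
    have habs : Filter.Tendsto (fun z => |F x z - F x w|) (𝓝[Set.Ioc w b] w) (𝓝 0) := by
      have h1 : Filter.Tendsto (fun z => F x z - F x w) (𝓝[Set.Ioc w b] w)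
          (𝓝 (F x w - F x w)) := hFtend.sub tendsto_const_nhds
      rw [sub_self] at h1
      simpa using h1.abs
    have hηtend : Filter.Tendsto η (𝓝[Set.Ioc w b] w) (𝓝 (F x w)) := by
      rw [tendsto_iff_dist_tendsto_zero]
      simp only [Real.dist_eq]
      exact squeeze_zero' (Filter.Eventually.of_forall fun z => abs_nonneg _)
        (hmem.mono fun z hz => (hη z hz).2.1) habs
    have hgutend : Filter.Tendsto (fun z => gu x (η z) z) (𝓝[Set.Ioc w b] w)
        (𝓝 (gu x (F x w) w)) := by
      have hp : ((x, F x w, w) : (Fin n → ℝ) × ℝ × ℝ) ∈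
          (closure Ω) ×ˢ (Set.Ici 0 ×ˢ Set.Ici 0) := ⟨hx, hFw, hw0⟩
      have hc := hgucont _ hp
      have h2 : Filter.Tendsto (fun z => ((x, η z, z) : (Fin n → ℝ) × ℝ × ℝ))
          (𝓝[Set.Ioc w b] w)
          (𝓝[(closure Ω) ×ˢ (Set.Ici 0 ×ˢ Set.Ici 0)] (x, F x w, w)) := by
        rw [tendsto_nhdsWithin_iff]
        constructor
        · exact tendsto_const_nhds.prodMk_nhds (hηtend.prodMk_nhds
            (tendsto_id.mono_right nhdsWithin_le_nhds))
        · exact hmem.mono fun z hz => ⟨hx, (hη z hz).1, le_trans hw0 hz.1.le⟩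
      exact Filter.Tendsto.comp hc h2
    have hslopeF : Filter.Tendsto (slope (F x) w) (𝓝[Set.Ioc w b] w)
        (𝓝 (-fv x (F x w) w / fu x (F x w) w)) :=
      (hasDerivWithinAt_iff_tendsto_slope.1 (hFderiv x hx w hw0)).mono_left
        (nhdsWithin_mono w hsubIcc)
    have hslopeg : Filter.Tendsto (slope (fun s => g x (F x w) s) w) (𝓝[Set.Ioc w b] w)
        (𝓝 (gv x (F x w) w)) :=
      (hasDerivWithinAt_iff_tendsto_slope.1 (hdgv x hx (F x w) hFw w hw0)).mono_left
        (nhdsWithin_mono w hsubIcc)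
    have hcomb := hslopeg.add (hgutend.mul hslopeF)
    rw [hasDerivWithinAt_iff_tendsto_slope, Set.Icc_diff_left]
    refine hcomb.congr' ?_
    filter_upwards [hmem] with z hz
    have hzw : z - w ≠ 0 := sub_ne_zero.2 hz.1.ne'
    have hspec := (hη z hz).2.2
    simp only [slope_def_field]
    field_simp
    linear_combination -hspec
  -- quantitative decrease
  have key2 : ∀ M₁ : ℝ, 0 < M₁ → ∃ σ₁ : ℝ, 0 < σ₁ ∧ ∀ x ∈ closure Ω, ∀ v v₁ : ℝ,
      0 ≤ v → v < v₁ → v₁ ≤ M₁ →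
      g x (max (F x v₁) 0) v₁ - g x (max (F x v) 0) v ≤ -σ₁ * (v₁ - v) := by
    intro M₁ hM₁
    have hclcomp : IsCompact (closure Ω) := hΩb.isCompact_closure
    obtain ⟨x₀, hx₀⟩ := hΩc.nonempty
    have hx₀c : x₀ ∈ closure Ω := subset_closure hx₀
    have hK₀ : IsCompact ((closure Ω) ×ˢ Set.Icc (0:ℝ) M₁) := hclcomp.prod isCompact_Icc
    have hFPcont : ContinuousOn (fun q : (Fin n → ℝ) × ℝ => F q.1 q.2)
        ((closure Ω) ×ˢ Set.Icc (0:ℝ) M₁) :=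
      hFcont.mono (Set.prod_mono subset_rfl Set.Icc_subset_Ici_self)
    obtain ⟨Cb, hCb⟩ := (hK₀.image_of_continuousOn hFPcont).bddAbove
    set C := max Cb 0 with hCdef
    have hCge : ∀ x ∈ closure Ω, ∀ v ∈ Set.Icc (0:ℝ) M₁, max (F x v) 0 ≤ C := by
      intro x hx v hv
      have h1 : F x v ≤ Cb := hCb (Set.mem_image_of_mem _ (Set.mk_mem_prod hx hv))
      rw [hCdef]
      exact max_le_max h1 le_rfl
    have hC0 : (0:ℝ) ≤ C := le_max_right _ _
    set K : Set ((Fin n → ℝ) × ℝ × ℝ) := (closure Ω) ×ˢ (Set.Icc 0 C ×ˢ Set.Icc 0 M₁) with hK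
    have hKc : IsCompact K := hclcomp.prod (isCompact_Icc.prod isCompact_Icc)
    have hKsub : K ⊆ (closure Ω) ×ˢ (Set.Ici 0 ×ˢ Set.Ici 0) :=
      Set.prod_mono subset_rfl (Set.prod_mono Set.Icc_subset_Ici_self Set.Icc_subset_Ici_self)
    have hKne : K.Nonempty :=
      ⟨(x₀, 0, 0), Set.mk_mem_prod hx₀c (Set.mk_mem_prod ⟨le_rfl, hC0⟩ ⟨le_rfl, hM₁.le⟩)⟩
    -- the maximum of gv on K
    obtain ⟨qa, hqaK, hqamax⟩ := hKc.exists_isMaxOn hKne (hgvcont.mono hKsub)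
    have hqa := hKsub hqaK
    have hgvqa : gv qa.1 qa.2.1 qa.2.2 < 0 := (hA2 qa.1 hqa.1 qa.2.1 hqa.2.1 qa.2.2 hqa.2.2).2
    set σa := -(gv qa.1 qa.2.1 qa.2.2) with hσadef
    have hσa0 : 0 < σa := by rw [hσadef]; linarith
    -- the maximum of D on K
    have hDcont : ContinuousOn (fun q : (Fin n → ℝ) × ℝ × ℝ =>
        gv q.1 q.2.1 q.2.2 + gu q.1 q.2.1 q.2.2 * (-fv q.1 q.2.1 q.2.2 / fu q.1 q.2.1 q.2.2))
        ((closure Ω) ×ˢ (Set.Ici 0 ×ˢ Set.Ici 0)) :=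
      hgvcont.add (hgucont.mul ((hfvcont.neg).div hfucont
        (fun q hq => ne_of_lt (hA2 q.1 hq.1 q.2.1 hq.2.1 q.2.2 hq.2.2).1)))
    obtain ⟨qb, hqbK, hqbmax⟩ := hKc.exists_isMaxOn hKne (hDcont.mono hKsub)
    have hqb := hKsub hqbK
    have hDqb : gv qb.1 qb.2.1 qb.2.2 +
        gu qb.1 qb.2.1 qb.2.2 * (-fv qb.1 qb.2.1 qb.2.2 / fu qb.1 qb.2.1 qb.2.2) < 0 :=
      Dneg_aux (hA2 qb.1 hqb.1 qb.2.1 hqb.2.1 qb.2.2 hqb.2.2).1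
        (hA5 qb.1 hqb.1 qb.2.1 hqb.2.1 qb.2.2 hqb.2.2)
    set σb := -(gv qb.1 qb.2.1 qb.2.2 +
        gu qb.1 qb.2.1 qb.2.2 * (-fv qb.1 qb.2.1 qb.2.2 / fu qb.1 qb.2.1 qb.2.2)) with hσbdef
    have hσb0 : 0 < σb := by rw [hσbdef]; linarith
    refine ⟨min σa σb, lt_min hσa0 hσb0, ?_⟩
    intro x hx v v₁ hv0 hvv hvM
    have hv₁0 : (0:ℝ) ≤ v₁ := le_trans hv0 hvv.le
    -- fencing estimate on subintervals where F ≥ 0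
    have hfence : ∀ a b : ℝ, 0 ≤ a → a < b → b ≤ M₁ → (∀ t ∈ Set.Icc a b, 0 ≤ F x t) →
        g x (F x b) b - g x (F x a) a ≤ -σb * (b - a) := by
      intro a b ha0 hab hbM hFnn
      have hFsub : Set.Icc a b ⊆ Set.Ici (0:ℝ) := fun t ht => le_trans ha0 ht.1
      have hmapc : ContinuousOn (fun z => ((x, F x z, z) : (Fin n → ℝ) × ℝ × ℝ))
          (Set.Icc a b) :=
        continuousOn_const.prodMk (((hFc x hx).mono hFsub).prodMk continuousOn_id)
      have hfc : ContinuousOn (fun z => g x (F x z) z) (Set.Icc a b) :=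
        hgcont.comp hmapc (fun t ht => ⟨hx, hFnn t ht, le_trans ha0 ht.1⟩)
      have hfd : ∀ t ∈ Set.Ico a b, HasDerivWithinAt (fun z => g x (F x z) z)
          (gv x (F x t) t + gu x (F x t) t * (-fv x (F x t) t / fu x (F x t) t))
          (Set.Ici t) t := by
        intro t ht
        have h0t : (0:ℝ) ≤ t := le_trans ha0 ht.1
        have hphi := hPhi x hx t b h0t ht.2 (fun r hr => hFnn r ⟨le_trans ht.1 hr.1, hr.2⟩)
        have hmem : Set.Icc t b ∈ 𝓝[Set.Ici t] t := by
          have h1 : Set.Ici t ∩ Set.Iic b ∈ 𝓝[Set.Ici t] t :=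
            inter_mem_nhdsWithin _ (Iic_mem_nhds ht.2)
          rwa [Set.Ici_inter_Iic] at h1
        exact hphi.mono_of_mem_nhdsWithin hmem
      have hBc : ContinuousOn (fun t : ℝ => g x (F x a) a + (-σb) * (t - a)) (Set.Icc a b) :=
        (continuous_const.add (continuous_const.mul (continuous_id.sub continuous_const))).continuousOn
      have hBd : ∀ t ∈ Set.Ico a b, HasDerivWithinAt
          (fun t : ℝ => g x (F x a) a + (-σb) * (t - a)) (-σb) (Set.Ici t) t := by
        intro t ht
        have h1 : HasDerivAt (fun t : ℝ => g x (F x a) a + (-σb) * (t - a)) (-σb) t := by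
          have h2 := (((hasDerivAt_id t).sub_const a).const_mul (-σb)).const_add (g x (F x a) a)
          simpa using h2
        exact h1.hasDerivWithinAt
      have hbound : ∀ t ∈ Set.Ico a b,
          gv x (F x t) t + gu x (F x t) t * (-fv x (F x t) t / fu x (F x t) t) ≤ -σb := by
        intro t ht
        have h0t : (0:ℝ) ≤ t := le_trans ha0 ht.1
        have htM : t ≤ M₁ := le_trans ht.2.le hbM
        have hFt : (0:ℝ) ≤ F x t := hFnn t ⟨ht.1, ht.2.le⟩
        have hFtC : F x t ≤ C := le_trans (le_max_left _ _) (hCge x hx t ⟨h0t, htM⟩)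
        have hmem : ((x, F x t, t) : (Fin n → ℝ) × ℝ × ℝ) ∈ K :=
          Set.mk_mem_prod hx (Set.mk_mem_prod ⟨hFt, hFtC⟩ ⟨h0t, htM⟩)
        have h1 : gv x (F x t) t + gu x (F x t) t * (-fv x (F x t) t / fu x (F x t) t) ≤
            gv qb.1 qb.2.1 qb.2.2 +
            gu qb.1 qb.2.1 qb.2.2 * (-fv qb.1 qb.2.1 qb.2.2 / fu qb.1 qb.2.1 qb.2.2) :=
          hqbmax hmem
        rw [hσbdef]
        linarith
      have hres := image_le_of_deriv_right_le_deriv_boundary hfc hfd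
        (by simp) hBc hBd hbound
      have hend := hres ⟨hab.le, le_rfl⟩
      linarith
    -- the case split
    by_cases hall : ∀ t ∈ Set.Icc v v₁, 0 ≤ F x t
    · have h := hfence v v₁ hv0 hvv hvM hall
      have h1 : max (F x v) 0 = F x v := max_eq_left (hall v ⟨le_rfl, hvv.le⟩)
      have h2 : max (F x v₁) 0 = F x v₁ := max_eq_left (hall v₁ ⟨hvv.le, le_rfl⟩)
      rw [h1, h2]
      have h3 : min σa σb * (v₁ - v) ≤ σb * (v₁ - v) :=
        mul_le_mul_of_nonneg_right (min_le_right _ _) (by linarith)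
      linarith
    · push_neg at hall
      obtain ⟨t₀, ht₀, hFt₀⟩ := hall
      set T₂ := Set.Icc v v₁ ∩ (F x) ⁻¹' Set.Iic 0 with hT₂
      have hsub' : Set.Icc v v₁ ⊆ Set.Ici (0:ℝ) := fun t ht => le_trans hv0 ht.1
      have hcl : IsClosed T₂ :=
        ((hFc x hx).mono hsub').preimage_isClosed_of_isClosed isClosed_Icc isClosed_Iic
      have hne : T₂.Nonempty := ⟨t₀, ht₀, hFt₀.le⟩
      have hbdd : BddBelow T₂ := ⟨v, fun t ht => ht.1.1⟩
      set w₁ := sInf T₂ with hw₁def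
      have hw₁T : w₁ ∈ T₂ := hcl.csInf_mem hne hbdd
      have hvw₁ : v ≤ w₁ := hw₁T.1.1
      have hw₁v₁ : w₁ ≤ v₁ := hw₁T.1.2
      have hFw₁ : F x w₁ ≤ 0 := hw₁T.2
      have h0w₁ : (0:ℝ) ≤ w₁ := le_trans hv0 hvw₁
      have hposlt : ∀ t ∈ Set.Ico v w₁, 0 < F x t := by
        intro t ht
        by_contra hle
        push_neg at hle
        have htT : t ∈ T₂ := ⟨⟨ht.1, le_trans ht.2.le hw₁v₁⟩, hle⟩
        exact absurd (csInf_le hbdd htT) (not_le.2 ht.2)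
      have hFright : ∀ t ∈ Set.Icc w₁ v₁, max (F x t) 0 = 0 := by
        intro t ht
        have h1 : max (F x t) 0 ≤ max (F x w₁) 0 :=
          hFanti x hx h0w₁ (le_trans h0w₁ ht.1) ht.1
        have h2 : max (F x w₁) 0 = 0 := max_eq_right hFw₁
        rw [h2] at h1
        exact le_antisymm h1 (le_max_right _ _)
      -- piece 2 : on [w₁, v₁] where F₊ = 0
      have hP2 : g x 0 v₁ - g x 0 w₁ ≤ -σa * (v₁ - w₁) := by
        have hψ : AntitoneOn (fun s => g x 0 s + σa * s) (Set.Icc w₁ v₁) := by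
          apply antiOn_Icc_aux (φ' := fun s => gv x 0 s + σa) h0w₁
          · intro s hs
            have hs0 : (0:ℝ) ≤ s := le_trans h0w₁ hs.1
            have hd1 : HasDerivWithinAt (fun s => g x 0 s) (gv x 0 s) (Set.Ici 0) s :=
              hdgv x hx 0 Set.self_mem_Ici s hs0
            have hd2 : HasDerivWithinAt (fun s : ℝ => σa * s) σa (Set.Ici 0) s := by
              simpa using (hasDerivWithinAt_id s (Set.Ici 0)).const_mul σa
            exact hd1.add hd2
          · intro s hs
            have hs0 : (0:ℝ) ≤ s := le_trans h0w₁ hs.1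
            have hmem : ((x, 0, s) : (Fin n → ℝ) × ℝ × ℝ) ∈ K :=
              Set.mk_mem_prod hx (Set.mk_mem_prod ⟨le_rfl, hC0⟩ ⟨hs0, le_trans hs.2 hvM⟩)
            have h1 : gv x 0 s ≤ gv qa.1 qa.2.1 qa.2.2 := hqamax hmem
            rw [hσadef]
            linarith
        have h := hψ ⟨le_rfl, hw₁v₁⟩ ⟨hw₁v₁, le_rfl⟩ hw₁v₁
        simp only at h
        linarith
      -- piece 1 : on [v, w₁] where F ≥ 0
      have hP1 : g x 0 w₁ - g x (max (F x v) 0) v ≤ -σb * (w₁ - v) := by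
        rcases eq_or_lt_of_le hvw₁ with heq | hlt
        · have hmv : max (F x v) 0 = 0 := by
            rw [heq]
            exact max_eq_right hFw₁
          rw [hmv, ← heq]
          simp
        · have hFw₁ge0 : (0:ℝ) ≤ F x w₁ := by
            have hnb : (𝓝[Set.Ico v w₁] w₁).NeBot := by
              apply mem_closure_iff_nhdsWithin_neBot.1
              rw [closure_Ico hlt.ne]
              exact ⟨hlt.le, le_rfl⟩
            have hct : Filter.Tendsto (F x) (𝓝[Set.Ico v w₁] w₁) (𝓝 (F x w₁)) :=
              ((hFc x hx) w₁ h0w₁).mono (fun t ht => le_trans hv0 ht.1)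
            exact ge_of_tendsto hct
              (eventually_mem_nhdsWithin.mono fun t ht => (hposlt t ht).le)
          have hFnnI : ∀ t ∈ Set.Icc v w₁, 0 ≤ F x t := by
            intro t ht
            rcases eq_or_lt_of_le ht.2 with he | hl
            · rw [he]; exact hFw₁ge0
            · exact (hposlt t ⟨ht.1, hl⟩).le
          have hf := hfence v w₁ hv0 hlt (le_trans hw₁v₁ hvM) hFnnI
          have hmaxv : max (F x v) 0 = F x v := max_eq_left (hposlt v ⟨le_rfl, hlt⟩).le
          have hFw₁0 : F x w₁ = 0 := le_antisymm hFw₁ hFw₁ge0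
          rw [hmaxv]
          rw [hFw₁0] at hf
          exact hf
      have hmax1 : max (F x v₁) 0 = 0 := hFright v₁ ⟨hw₁v₁, le_rfl⟩
      rw [hmax1]
      have e1 : min σa σb * (w₁ - v) ≤ σb * (w₁ - v) :=
        mul_le_mul_of_nonneg_right (min_le_right _ _) (by linarith)
      have e2 : min σa σb * (v₁ - w₁) ≤ σa * (v₁ - w₁) :=
        mul_le_mul_of_nonneg_right (min_le_left _ _) (by linarith)
      have e3 : min σa σb * (w₁ - v) + min σa σb * (v₁ - w₁) = min σa σb * (v₁ - v) := by ring
      linarith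
  refine ⟨?_, key2⟩
  intro x hx a ha b hb hab
  obtain ⟨σ, hσ0, hσ⟩ := key2 b (lt_of_le_of_lt ha hab)
  have h1 := hσ x hx a b ha hab le_rfl
  have h2 : (0:ℝ) < σ * (b - a) := mul_pos hσ0 (sub_pos.2 hab)
  simp only
  linarith
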